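/- Global synchronization theorem: Consider the coupled map lattice u(x, n+1) = epsilon * (L f(u(., n)))(x) + f(u(x, n)) on a finite connected graph M, where f : R -> R is differentiable with sup |f'| finite. If epsilon <= 2/(lambda_1 + lambda_K) and (1 - epsilon * lambda_1) * sup |f'| < 1, then the Lyapunov function Phi(n) = ||Lambda u(., n)||^2 satisfies Phi(n+1) <= ((1 - epsilon*lambda_1) * sup|f'|)^2 * Phi(n), and hence Phi(n) -> 0 as n -> infinity, i.e., the system asymptotically synchronizes. -/

import Mathlib

open Filter Finset RealInnerProductSpace

section Aux

variable {V : Type*} [Fintype V] [DecidableEq V] (G : SimpleGraph V) [DecidableRel G.Adj]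

lemma aux_nbr_sum (F : V → ℝ) (x : V) :
    ∑ y ∈ G.neighborFinset x, F y = ∑ y, if G.Adj x y then F y else 0 := by
  rw [← Finset.sum_filter]
  congr 1
  ext y
  simp [SimpleGraph.mem_neighborFinset]

lemma aux_swap (F : V → V → ℝ) :
    ∑ x, ∑ y ∈ G.neighborFinset x, F x y = ∑ x, ∑ y ∈ G.neighborFinset x, F y x := by
  have h : ∀ (F : V → V → ℝ) (x : V), ∑ y ∈ G.neighborFinset x, F x y
      = ∑ y, if G.Adj x y then F x y else 0 := fun F x => aux_nbr_sum G (F x) x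
  simp_rw [h]
  rw [Finset.sum_comm]
  apply Finset.sum_congr rfl; intro a _
  rw [h (fun p q => F q p) a]
  apply Finset.sum_congr rfl; intro b _
  simp only [G.adj_comm b a]

lemma aux_sym (hd : ∀ x, (0:ℝ) < (G.degree x : ℝ)) (a b : V → ℝ) :
    ∑ x, (G.degree x : ℝ) *
        (a x - (1 / (G.degree x : ℝ)) * ∑ y ∈ G.neighborFinset x, a y) * b x
      = ∑ x, (G.degree x : ℝ) * a x *
        (b x - (1 / (G.degree x : ℝ)) * ∑ y ∈ G.neighborFinset x, b y) := by
  have h1 : ∀ x, (G.degree x : ℝ) *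
      (a x - (1 / (G.degree x : ℝ)) * ∑ y ∈ G.neighborFinset x, a y) * b x
      = (G.degree x : ℝ) * a x * b x - ∑ y ∈ G.neighborFinset x, a y * b x := by
    intro x
    rw [← Finset.sum_mul]
    have := (hd x).ne'
    field_simp
  have h2 : ∀ x, (G.degree x : ℝ) * a x *
      (b x - (1 / (G.degree x : ℝ)) * ∑ y ∈ G.neighborFinset x, b y)
      = (G.degree x : ℝ) * a x * b x - ∑ y ∈ G.neighborFinset x, a x * b y := by
    intro x
    rw [← Finset.mul_sum]
    have := (hd x).ne'
    field_simp
  simp_rw [h1, h2, Finset.sum_sub_distrib]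
  congr 1
  exact (aux_swap G (fun p q => a p * b q)).symm

lemma aux_dirichlet (hd : ∀ x, (0:ℝ) < (G.degree x : ℝ)) (v : V → ℝ) :
    ∑ x, (G.degree x : ℝ) * v x *
        (v x - (1 / (G.degree x : ℝ)) * ∑ y ∈ G.neighborFinset x, v y)
      = (1/2) * ∑ x, ∑ y ∈ G.neighborFinset x, (v x - v y)^2 := by
  have h1 : ∀ x, (G.degree x : ℝ) * v x *
      (v x - (1 / (G.degree x : ℝ)) * ∑ y ∈ G.neighborFinset x, v y)
      = (G.degree x : ℝ) * v x ^ 2 - ∑ y ∈ G.neighborFinset x, v x * v y := by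
    intro x
    rw [← Finset.mul_sum]
    have := (hd x).ne'
    field_simp
  have h2 : ∀ x, ∑ y ∈ G.neighborFinset x, (v x - v y)^2
      = (G.degree x : ℝ) * v x ^ 2 - 2 * ∑ y ∈ G.neighborFinset x, v x * v y
        + ∑ y ∈ G.neighborFinset x, v y ^ 2 := by
    intro x
    have h3 : ∀ y ∈ G.neighborFinset x, (v x - v y)^2
        = v x ^ 2 - 2 * (v x * v y) + v y ^ 2 := by intro y _; ring
    rw [Finset.sum_congr rfl h3, Finset.sum_add_distrib, Finset.sum_sub_distrib,
      Finset.sum_const, ← Finset.mul_sum, SimpleGraph.card_neighborFinset_eq_degree,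
      nsmul_eq_mul]
  have h4 : ∑ x, ∑ y ∈ G.neighborFinset x, v y ^ 2
      = ∑ x, (G.degree x : ℝ) * v x ^ 2 := by
    rw [aux_swap G (fun p q => v q ^ 2)]
    apply Finset.sum_congr rfl
    intro x _
    rw [Finset.sum_const, SimpleGraph.card_neighborFinset_eq_degree, nsmul_eq_mul]
  have hR : ∑ x, ∑ y ∈ G.neighborFinset x, (v x - v y)^2
      = (∑ x, (G.degree x : ℝ) * v x ^ 2) * 2
        - 2 * ∑ x, ∑ y ∈ G.neighborFinset x, v x * v y := by
    rw [Finset.sum_congr rfl (fun x _ => h2 x), Finset.sum_add_distrib,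
      Finset.sum_sub_distrib, h4, ← Finset.mul_sum]
    ring
  have hLHS : ∑ x, (G.degree x : ℝ) * v x *
      (v x - (1 / (G.degree x : ℝ)) * ∑ y ∈ G.neighborFinset x, v y)
      = (∑ x, (G.degree x : ℝ) * v x ^ 2)
        - ∑ x, ∑ y ∈ G.neighborFinset x, v x * v y := by
    rw [Finset.sum_congr rfl (fun x _ => h1 x), Finset.sum_sub_distrib]
  rw [hLHS, hR]
  ring

/-- The symmetrized graph operator on Euclidean space. -/
noncomputable def opB (s : V → ℝ) : EuclideanSpace ℝ V →ₗ[ℝ] EuclideanSpace ℝ V where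
  toFun W := WithLp.toLp 2 (fun x => s x * ((W x / s x)
      - (1 / (G.degree x : ℝ)) * ∑ y ∈ G.neighborFinset x, W y / s y))
  map_add' a b := by
    ext x
    simp only [PiLp.toLp_apply, PiLp.add_apply, add_div, Finset.sum_add_distrib]
    ring
  map_smul' c a := by
    ext x
    simp only [PiLp.toLp_apply, PiLp.smul_apply, smul_eq_mul, mul_div_assoc, RingHom.id_apply]
    rw [← Finset.mul_sum]
    ring

lemma opB_apply (s : V → ℝ) (W : EuclideanSpace ℝ V) (x : V) :
    opB G s W x = s x * ((W x / s x)
      - (1 / (G.degree x : ℝ)) * ∑ y ∈ G.neighborFinset x, W y / s y) := rfl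

end Aux

/-- Global synchronization theorem. For the coupled map lattice
`u(x, n+1) = ε (L f(u(·,n)))(x) + f(u(x,n))` on a finite connected graph, if
`ε ≤ 2/(λ₁ + λ_K)` and `(1 - ελ₁)·sup|f'| < 1`, then the Lyapunov function
`Φ(n) = ‖Λ u(·,n)‖²` satisfies `Φ(n+1) ≤ ((1 - ελ₁)·sup|f'|)² Φ(n)` and hence
`Φ(n) → 0`, i.e., the system asymptotically synchronizes. -/
theorem stmt_14 {V : Type*} [Fintype V] [DecidableEq V] [Nonempty V]
    (G : SimpleGraph V) [DecidableRel G.Adj] (hconn : G.Connected)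
    (L : (V → ℝ) → (V → ℝ))
    (hL : ∀ v x, L v x = (1 / (G.degree x : ℝ)) * ∑ y ∈ G.neighborFinset x, v y - v x)
    (inn : (V → ℝ) → (V → ℝ) → ℝ)
    (hinn : ∀ u v, inn u v =
      (1 / (Fintype.card V : ℝ)) * ∑ x, (G.degree x : ℝ) * u x * v x)
    (Λ : (V → ℝ) →ₗ[ℝ] (V → ℝ))
    (hΛ : ∀ u v : V → ℝ, -(inn u (L v)) = inn (Λ u) (Λ v))
    (lam1 lamK : ℝ) (hlam1 : 0 < lam1) (hlamK : lam1 ≤ lamK)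
    (heig : ∀ (μ : ℝ) (v : V → ℝ), v ≠ 0 → (∀ x, -(L v x) = μ * v x) →
      μ = 0 ∨ (lam1 ≤ μ ∧ μ ≤ lamK))
    (f : ℝ → ℝ) (hf : Differentiable ℝ f)
    (C : ℝ) (hC : ∀ x, |deriv f x| ≤ C)
    (ε : ℝ) (hε0 : 0 ≤ ε) (hε : ε ≤ 2 / (lam1 + lamK))
    (hstab : (1 - ε * lam1) * C < 1)
    (u : ℕ → V → ℝ)
    (hdyn : ∀ n x, u (n + 1) x = ε * L (fun y => f (u n y)) x + f (u n x))
    (Φ : ℕ → ℝ) (hΦ : ∀ n, Φ n = inn (Λ (u n)) (Λ (u n))) :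
    (∀ n, Φ (n + 1) ≤ ((1 - ε * lam1) * C) ^ 2 * Φ n) ∧
      Tendsto Φ atTop (nhds 0) := by
  -- generic scalar facts
  have hC0 : 0 ≤ C := (abs_nonneg _).trans (hC 0)
  have hSpos : 0 < lam1 + lamK := by linarith
  have hsum : ε * (lam1 + lamK) ≤ 2 := by
    calc ε * (lam1 + lamK) ≤ (2 / (lam1 + lamK)) * (lam1 + lamK) :=
          mul_le_mul_of_nonneg_right hε hSpos.le
      _ = 2 := by field_simp
  have h1ε : 0 ≤ 1 - ε * lam1 := by nlinarith
  have hr0 : 0 ≤ (1 - ε * lam1) * C := mul_nonneg h1ε hC0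
  have hr1 : ((1 - ε * lam1) * C) ^ 2 < 1 := by nlinarith
  have hrpow0 : 0 ≤ ((1 - ε * lam1) * C) ^ 2 := sq_nonneg _
  -- Lipschitz bound
  have hlip : ∀ a b : ℝ, |f a - f b| ≤ C * |a - b| := by
    intro a b
    have := Convex.norm_image_sub_le_of_norm_deriv_le (s := Set.univ)
      (fun x _ => hf x) (fun x _ => by simpa [Real.norm_eq_abs] using hC x)
      convex_univ (Set.mem_univ b) (Set.mem_univ a)
    simpa [Real.norm_eq_abs] using this
  have hlipsq : ∀ a b : ℝ, (f a - f b) ^ 2 ≤ C ^ 2 * (a - b) ^ 2 := by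
    intro a b
    have h := hlip a b
    have h2 := mul_self_le_mul_self (abs_nonneg (f a - f b)) h
    have e1 : |f a - f b| * |f a - f b| = (f a - f b) ^ 2 := by
      rw [abs_mul_abs_self]; ring
    have e2 : (C * |a - b|) * (C * |a - b|) = C ^ 2 * (a - b) ^ 2 := by
      rw [show (C * |a - b|) * (C * |a - b|) = C * C * (|a - b| * |a - b|) from by ring,
        abs_mul_abs_self]; ring
    rw [e1, e2] at h2
    exact h2
  by_cases hcard : Fintype.card V = 1
  · -- trivial case: a single vertex, everything is zero
    haveI : Subsingleton V := Fintype.card_le_one_iff_subsingleton.mp hcard.le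
    have hdeg0 : ∀ x : V, (G.degree x : ℝ) = 0 := by
      intro x
      have : G.degree x = 0 := by
        by_contra h
        obtain ⟨w, hw⟩ := (G.degree_pos_iff_exists_adj x).mp (Nat.pos_of_ne_zero h)
        exact G.ne_of_adj hw (Subsingleton.elim x w)
      exact_mod_cast this
    have innzero : ∀ a b : V → ℝ, inn a b = 0 := by
      intro a b
      rw [hinn]
      simp [hdeg0]
    have hΦ0 : ∀ n, Φ n = 0 := fun n => by rw [hΦ, innzero]
    constructor
    · intro n; rw [hΦ0, hΦ0]; simp
    · have : Φ = fun _ => 0 := funext hΦ0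
      rw [this]; exact tendsto_const_nhds
  · -- main case
    have hcard2 : 1 < Fintype.card V := by
      have hpos : 0 < Fintype.card V := Fintype.card_pos
      omega
    have hdeg : ∀ x : V, (0:ℝ) < (G.degree x : ℝ) := by
      intro x
      obtain ⟨y, hy⟩ := Fintype.exists_ne_of_one_lt_card hcard2 x
      obtain ⟨p⟩ := hconn x y
      have : 0 < G.degree x := by
        cases p with
        | nil => exact absurd rfl hy.symm
        | cons h q => exact (G.degree_pos_iff_exists_adj x).mpr ⟨_, h⟩
      exact_mod_cast this
    set N : ℝ := (Fintype.card V : ℝ) with hNdef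
    have hN : 0 < N := by positivity
    set s : V → ℝ := fun x => Real.sqrt ((G.degree x : ℝ) / N) with hsdef
    have hs : ∀ x, 0 < s x := fun x => Real.sqrt_pos.mpr (div_pos (hdeg x) hN)
    have hs2 : ∀ x, s x ^ 2 = (G.degree x : ℝ) / N := fun x =>
      Real.sq_sqrt (div_pos (hdeg x) hN).le
    -- the operator A = -L as a plain function
    set Af : (V → ℝ) → V → ℝ := fun v x =>
      v x - (1 / (G.degree x : ℝ)) * ∑ y ∈ G.neighborFinset x, v y with hAfdef
    have hAfL : ∀ (v : V → ℝ) x, -(L v x) = Af v x := by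
      intro v x; rw [hL]; show _ = v x - _; ring
    -- the conjugation map φ
    set φf : (V → ℝ) → EuclideanSpace ℝ V := fun v => WithLp.toLp 2 (fun x => s x * v x) with hφdef
    have hψ : ∀ (z : V → ℝ) (y : V), φf z y / s y = z y := by
      intro z y
      show s y * z y / s y = z y
      rw [mul_comm, mul_div_assoc, div_self (hs y).ne', mul_one]
    -- inner product formulas
    have hip : ∀ (W Z : EuclideanSpace ℝ V), ⟪W, Z⟫ = ∑ x, W x * Z x := by
      intro W Z
      simp [PiLp.inner_apply, RCLike.inner_apply, conj_trivial]
      exact Finset.sum_congr rfl (fun x _ => mul_comm _ _)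
    have hinnE : ∀ a b : V → ℝ, inn a b = ⟪φf a, φf b⟫ := by
      intro a b
      rw [hip, hinn]
      rw [Finset.mul_sum]
      apply Finset.sum_congr rfl
      intro x _
      have h : φf a x * φf b x = s x ^ 2 * (a x * b x) := by
        show (s x * a x) * (s x * b x) = _; ring
      rw [h, hs2]
      ring
    -- B = opB G s and its basic properties
    have hBφ : ∀ z : V → ℝ, opB G s (φf z) = φf (Af z) := by
      intro z
      ext x
      rw [opB_apply]
      simp only [hψ]
      rfl
    have hφψ : ∀ W : EuclideanSpace ℝ V, φf (fun y => W y / s y) = W := by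
      intro W
      ext x
      show s x * (W x / s x) = W x
      rw [mul_comm, div_mul_cancel₀ _ (hs x).ne']
    have hB : (opB G s).IsSymmetric := by
      intro W Z
      have hWe : W = φf (fun y => W y / s y) := (hφψ W).symm
      have hZe : Z = φf (fun y => Z y / s y) := (hφψ Z).symm
      rw [hWe, hZe, hBφ, hBφ, ← hinnE, ← hinnE, hinn, hinn]
      congr 1
      have hsym := aux_sym G hdeg (fun y => W y / s y) (fun y => Z y / s y)
      calc ∑ x, (G.degree x : ℝ) * (Af (fun y => W y / s y) x) * (Z x / s x)
          = ∑ x, (G.degree x : ℝ) * (W x / s x) *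
              (Af (fun y => Z y / s y) x) := hsym
        _ = ∑ x, (G.degree x : ℝ) * (W x / s x) * (Af (fun y => Z y / s y) x) := rfl
    -- spectral decomposition
    have hfr : Module.finrank ℝ (EuclideanSpace ℝ V) = Fintype.card V :=
      finrank_euclideanSpace
    set b := hB.eigenvectorBasis hfr with hbdef
    set μ := hB.eigenvalues hfr with hμdef
    have happ : ∀ i, opB G s (b i) = μ i • b i := fun i =>
      hB.apply_eigenvectorBasis hfr i
    -- eigenvalue bounds
    have hμb : ∀ i, μ i = 0 ∨ (lam1 ≤ μ i ∧ μ i ≤ lamK) := by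
      intro i
      have he0 : b i ≠ 0 := (hB.hasEigenvector_eigenvectorBasis hfr i).2
      set v : V → ℝ := fun x => b i x / s x with hvdef
      have hv0 : v ≠ 0 := by
        intro hv
        apply he0
        have : b i = φf v := (hφψ (b i)).symm
        rw [this, hv]
        ext x
        show s x * (0 : V → ℝ) x = (0 : EuclideanSpace ℝ V) x
        simp
      apply heig (μ i) v hv0
      intro x
      rw [hAfL]
      have h1 : opB G s (φf v) = μ i • b i := by
        rw [hφψ (b i)]; exact happ i
      have h2 : φf (Af v) x = (μ i • b i) x := by rw [← hBφ, h1]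
      have h3 : s x * Af v x = μ i * b i x := by
        rw [show s x * Af v x = φf (Af v) x from rfl, h2, PiLp.smul_apply, smul_eq_mul]
      have hsx := (hs x).ne'
      have : Af v x = μ i * (b i x / s x) := by
        field_simp at h3 ⊢
        linarith [h3]
      exact this
    -- quadratic form formula
    have hquad : ∀ W : EuclideanSpace ℝ V,
        ⟪W, opB G s W⟫ = ∑ i, μ i * ⟪W, b i⟫ ^ 2 := by
      intro W
      rw [← OrthonormalBasis.sum_inner_mul_inner b W (opB G s W)]
      apply Finset.sum_congr rfl
      intro i _
      have h1 : ⟪b i, opB G s W⟫ = μ i * ⟪W, b i⟫ := by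
        rw [← hB (b i) W, happ i, real_inner_smul_left, real_inner_comm]
      rw [h1]
      ring
    -- the key identity : inn (Λ a) (Λ c) = inn a (Af c)
    have key1 : ∀ a c : V → ℝ, inn (Λ a) (Λ c) = inn a (Af c) := by
      intro a c
      rw [← hΛ a c, hinn, hinn]
      have h : ∀ x : V, (G.degree x : ℝ) * a x * Af c x
          = -((G.degree x : ℝ) * a x * L c x) := by
        intro x; rw [← hAfL]; ring
      rw [Finset.sum_congr rfl (fun x _ => h x), Finset.sum_neg_distrib]
      ring
    -- Φ in terms of the quadratic form
    have hΦeq : ∀ n, Φ n = ⟪φf (u n), opB G s (φf (u n))⟫ := by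
      intro n
      rw [hΦ, key1, hinnE, hBφ]
    have hΦnonneg : ∀ n, 0 ≤ Φ n := by
      intro n
      rw [hΦ, hinnE]
      exact real_inner_self_nonneg
    have hstep : ∀ n, Φ (n + 1) ≤ ((1 - ε * lam1) * C) ^ 2 * Φ n := by
      intro n
      set w : V → ℝ := fun x => f (u n x) with hwdef
      set W : EuclideanSpace ℝ V := φf w with hWdef
      have hu1 : ∀ x, u (n + 1) x = w x - ε * Af w x := by
        intro x
        rw [hdyn n x]
        have h1 : L (fun y => f (u n y)) x = L w x := rfl
        have h2 := hAfL w x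
        have h3 : w x = f (u n x) := rfl
        rw [h1, ← h2, h3]
        ring
      have hBWx : ∀ x, (opB G s W) x = s x * Af w x := by
        intro x
        rw [hWdef, hBφ w]
      have hP : φf (u (n + 1)) = W - ε • opB G s W := by
        ext x
        show s x * (u (n + 1) x) = _
        rw [hu1 x, PiLp.sub_apply, PiLp.smul_apply, smul_eq_mul, hBWx x]
        show s x * (w x - ε * Af w x) = s x * w x - ε * (s x * Af w x)
        ring
      have hc : ∀ i, ⟪φf (u (n + 1)), b i⟫ = (1 - ε * μ i) * ⟪W, b i⟫ := by
        intro i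
        rw [hP, inner_sub_left, real_inner_smul_left]
        have h1 : ⟪opB G s W, b i⟫ = μ i * ⟪W, b i⟫ := by
          rw [hB W (b i), happ i, real_inner_smul_right]
        rw [h1]
        ring
      have h1 : Φ (n + 1) ≤ (1 - ε * lam1) ^ 2 * ⟪W, opB G s W⟫ := by
        rw [hΦeq (n + 1), hquad, hquad W, Finset.mul_sum]
        apply Finset.sum_le_sum
        intro i _
        rw [hc i]
        rcases hμb i with h | ⟨ha, hb2⟩
        · simp [h]
        · have hm0 : 0 ≤ μ i := le_trans hlam1.le ha
          have hsq : (1 - ε * μ i) ^ 2 ≤ (1 - ε * lam1) ^ 2 := by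
            apply sq_le_sq'
            · nlinarith [mul_le_mul_of_nonneg_left hb2 hε0]
            · nlinarith [mul_le_mul_of_nonneg_left ha hε0]
          nlinarith [mul_le_mul_of_nonneg_left hsq
            (mul_nonneg hm0 (sq_nonneg (⟪W, b i⟫)))]
      have hWq : ⟪W, opB G s W⟫ = inn w (Af w) := by
        rw [hWdef, hBφ w, ← hinnE]
      have hdirich : ∀ v : V → ℝ, inn v (Af v)
          = 1 / N * ((1/2) * ∑ x, ∑ y ∈ G.neighborFinset x, (v x - v y)^2) := by
        intro v
        rw [hinn]
        congr 1
        exact aux_dirichlet G hdeg v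
      have hsums : ∑ x, ∑ y ∈ G.neighborFinset x, (w x - w y)^2
          ≤ C ^ 2 * ∑ x, ∑ y ∈ G.neighborFinset x, (u n x - u n y)^2 := by
        rw [Finset.mul_sum]
        apply Finset.sum_le_sum
        intro x _
        rw [Finset.mul_sum]
        apply Finset.sum_le_sum
        intro y _
        exact hlipsq (u n x) (u n y)
      have h3 : inn w (Af w) ≤ C ^ 2 * inn (u n) (Af (u n)) := by
        calc inn w (Af w)
            = 1 / N * ((1/2) * ∑ x, ∑ y ∈ G.neighborFinset x, (w x - w y)^2) :=
              hdirich w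
          _ ≤ 1 / N * ((1/2) *
                (C ^ 2 * ∑ x, ∑ y ∈ G.neighborFinset x, (u n x - u n y)^2)) := by
              apply mul_le_mul_of_nonneg_left _ (one_div_nonneg.mpr hN.le)
              apply mul_le_mul_of_nonneg_left hsums (by norm_num)
          _ = C ^ 2 * (1 / N * ((1/2) *
                ∑ x, ∑ y ∈ G.neighborFinset x, (u n x - u n y)^2)) := by ring
          _ = C ^ 2 * inn (u n) (Af (u n)) := by rw [← hdirich (u n)]
      have h4 : Φ n = inn (u n) (Af (u n)) := by rw [hΦ, key1]
      calc Φ (n + 1) ≤ (1 - ε * lam1) ^ 2 * ⟪W, opB G s W⟫ := h1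
        _ = (1 - ε * lam1) ^ 2 * inn w (Af w) := by rw [hWq]
        _ ≤ (1 - ε * lam1) ^ 2 * (C ^ 2 * inn (u n) (Af (u n))) :=
            mul_le_mul_of_nonneg_left h3 (sq_nonneg _)
        _ = ((1 - ε * lam1) * C) ^ 2 * Φ n := by rw [h4]; ring
    refine ⟨hstep, ?_⟩
    have hgeo : ∀ n, Φ n ≤ (((1 - ε * lam1) * C) ^ 2) ^ n * Φ 0 := by
      intro n
      induction n with
      | zero => simp
      | succ k ih =>
        calc Φ (k + 1) ≤ ((1 - ε * lam1) * C) ^ 2 * Φ k := hstep k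
          _ ≤ ((1 - ε * lam1) * C) ^ 2 * ((((1 - ε * lam1) * C) ^ 2) ^ k * Φ 0) :=
              mul_le_mul_of_nonneg_left ih hrpow0
          _ = (((1 - ε * lam1) * C) ^ 2) ^ (k + 1) * Φ 0 := by ring
    apply squeeze_zero hΦnonneg hgeo
    have ht := (tendsto_pow_atTop_nhds_zero_of_lt_one hrpow0 hr1).mul_const (Φ 0)
    simpa using ht
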